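/- Let A be a real n×d matrix and let u ∈ ℝⁿ satisfy u_i > 0 for all i. Then there exists a diagonal matrix W ∈ ℝ^{n×n} with 0 ≤ W_{ii} ≤ 1 for all i such that: (1) τ_i(WA) ≤ u_i for every i ∈ {1,…,n}, and (2) ∑_{i : W_{ii} ≠ 1} u_i ≤ d. -/

import Mathlib

open Matrix
open scoped Classical

/-- The leverage score of row `i` of `M`:
`τᵢ(M) = inf {‖x‖₂² : Mᵀx = mᵢ}` (the set is nonempty since `x = eᵢ` works). -/
noncomputable def lev {n d : ℕ} (M : Matrix (Fin n) (Fin d) ℝ) (i : Fin n) : ℝ :=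
  sInf {t : ℝ | ∃ x : Fin n → ℝ, Mᵀ *ᵥ x = M i ∧ t = ∑ j, (x j) ^ 2}

open Filter
open scoped Topology

namespace LevAux

variable {N D : ℕ}

/-- the constraint map as a linear map on Euclidean space -/
noncomputable def fmap (M : Matrix (Fin N) (Fin D) ℝ) :
    EuclideanSpace ℝ (Fin N) →ₗ[ℝ] (Fin D → ℝ) :=
  (Matrix.mulVecLin Mᵀ).comp (WithLp.linearEquiv 2 ℝ (Fin N → ℝ)).toLinearMap

lemma fmap_apply (M : Matrix (Fin N) (Fin D) ℝ) (x : EuclideanSpace ℝ (Fin N)) :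
    fmap M x = Mᵀ *ᵥ (WithLp.equiv 2 (Fin N → ℝ) x) := rfl

noncomputable def kerM (M : Matrix (Fin N) (Fin D) ℝ) :
    Submodule ℝ (EuclideanSpace ℝ (Fin N)) := LinearMap.ker (fmap M)

lemma normsq_eq (y : EuclideanSpace ℝ (Fin N)) : ‖y‖ ^ 2 = ∑ j, (y j) ^ 2 := by
  rw [EuclideanSpace.norm_eq, Real.sq_sqrt (by positivity)]
  simp [Real.norm_eq_abs, sq_abs]

lemma normsq_eq' (x : Fin N → ℝ) :
    ‖(WithLp.equiv 2 (Fin N → ℝ)).symm x‖ ^ 2 = ∑ j, (x j) ^ 2 :=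
  normsq_eq ((WithLp.equiv 2 (Fin N → ℝ)).symm x)

lemma fmap_single (M : Matrix (Fin N) (Fin D) ℝ) (i : Fin N) :
    fmap M (EuclideanSpace.single i 1) = M i := by
  funext j
  show ∑ k, Mᵀ j k * (EuclideanSpace.single i 1) k = M i j
  simp [EuclideanSpace.single_apply]

/-- the minimal norm solution -/
noncomputable def xstar (M : Matrix (Fin N) (Fin D) ℝ) (i : Fin N) :
    EuclideanSpace ℝ (Fin N) :=
  EuclideanSpace.single i 1 -
    (Submodule.orthogonalProjectionOnto (kerM M) (EuclideanSpace.single i 1) : EuclideanSpace ℝ (Fin N))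

lemma xstar_mem_orth (M : Matrix (Fin N) (Fin D) ℝ) (i : Fin N) :
    xstar M i ∈ (kerM M)ᗮ :=
  Submodule.sub_starProjection_mem_orthogonal _

lemma fmap_xstar (M : Matrix (Fin N) (Fin D) ℝ) (i : Fin N) :
    fmap M (xstar M i) = M i := by
  have h : (Submodule.orthogonalProjectionOnto (kerM M) (EuclideanSpace.single i 1) :
      EuclideanSpace ℝ (Fin N)) ∈ kerM M := SetLike.coe_mem _
  have h0 : fmap M ((Submodule.orthogonalProjectionOnto (kerM M) (EuclideanSpace.single i 1) :
      EuclideanSpace ℝ (Fin N))) = 0 := h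
  rw [xstar, map_sub, h0, sub_zero, fmap_single]

lemma norm_le_of_feas (M : Matrix (Fin N) (Fin D) ℝ) (i : Fin N)
    (y : EuclideanSpace ℝ (Fin N)) (hy : fmap M y = M i) :
    ‖xstar M i‖ ^ 2 ≤ ‖y‖ ^ 2 := by
  have hk : y - xstar M i ∈ kerM M := by
    have : fmap M (y - xstar M i) = 0 := by
      rw [map_sub, hy, fmap_xstar, sub_self]
    exact this
  have hinner : inner ℝ (xstar M i) (y - xstar M i) = (0:ℝ) :=
    (Submodule.mem_orthogonal' _ _).mp (xstar_mem_orth M i) _ hk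
  have h2 : ‖y‖ ^ 2 = ‖xstar M i‖ ^ 2 + ‖y - xstar M i‖ ^ 2 := by
    have hy' : y = xstar M i + (y - xstar M i) := by abel
    nth_rewrite 1 [hy']
    rw [norm_add_sq_real, hinner]
    ring
  nlinarith [sq_nonneg ‖y - xstar M i‖]

lemma lev_eq (M : Matrix (Fin N) (Fin D) ℝ) (i : Fin N) :
    lev M i = ‖xstar M i‖ ^ 2 := by
  apply le_antisymm
  · apply csInf_le
    · exact ⟨0, fun t ht => by obtain ⟨x, -, rfl⟩ := ht; positivity⟩
    · refine ⟨WithLp.equiv 2 (Fin N → ℝ) (xstar M i), fmap_xstar M i, ?_⟩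
      show ‖xstar M i‖ ^ 2 = ∑ j, (xstar M i j) ^ 2
      exact normsq_eq (xstar M i)
  · apply le_csInf
    · refine ⟨∑ j, (Pi.single (M := fun _ => ℝ) i 1 j)^2, Pi.single i 1, ?_, rfl⟩
      funext j
      show ∑ k, Mᵀ j k * Pi.single (M := fun _ => ℝ) i 1 k = M i j
      simp [Pi.single_apply]
    · rintro t ⟨x, hx, rfl⟩
      have h := norm_le_of_feas M i ((WithLp.equiv 2 (Fin N → ℝ)).symm x) hx
      rwa [normsq_eq'] at h

lemma lev_nonneg (M : Matrix (Fin N) (Fin D) ℝ) (i : Fin N) : 0 ≤ lev M i := by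
  rw [lev_eq]; positivity

lemma lev_le (M : Matrix (Fin N) (Fin D) ℝ) (i : Fin N) (x : Fin N → ℝ)
    (hx : Mᵀ *ᵥ x = M i) : lev M i ≤ ∑ j, (x j) ^ 2 :=
  csInf_le ⟨0, fun t ht => by obtain ⟨x, -, rfl⟩ := ht; positivity⟩ ⟨x, hx, rfl⟩

lemma lev_attained (M : Matrix (Fin N) (Fin D) ℝ) (i : Fin N) :
    ∃ x : Fin N → ℝ, Mᵀ *ᵥ x = M i ∧ lev M i = ∑ j, (x j) ^ 2 :=
  ⟨WithLp.equiv 2 (Fin N → ℝ) (xstar M i), fmap_xstar M i, by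
    rw [lev_eq]
    show ‖xstar M i‖ ^ 2 = ∑ j, (xstar M i j) ^ 2
    exact normsq_eq (xstar M i)⟩


lemma sum_lev_le (M : Matrix (Fin N) (Fin D) ℝ) :
    ∑ i, lev M i ≤ (D : ℝ) := by
  set E := EuclideanSpace ℝ (Fin N)
  set R := (kerM M)ᗮ with hR
  have hx : ∀ i, xstar M i ∈ R := xstar_mem_orth M
  set b := stdOrthonormalBasis ℝ R with hb
  set r := Module.finrank ℝ R with hr
  -- each lev in terms of coordinates
  have key : ∀ i, lev M i = ∑ k : Fin r, ((b k : E) i) ^ 2 := by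
    intro i
    rw [lev_eq]
    have h1 : ‖xstar M i‖ = ‖b.repr ⟨xstar M i, hx i⟩‖ := by
      rw [LinearIsometryEquiv.norm_map]
      rfl
    rw [h1, normsq_eq]
    refine Finset.sum_congr rfl fun k _ => ?_
    have h2 : b.repr ⟨xstar M i, hx i⟩ k = inner (𝕜 := ℝ) (b k) ⟨xstar M i, hx i⟩ :=
      b.repr_apply_apply _ k
    have h3 : inner (𝕜 := ℝ) (b k) (⟨xstar M i, hx i⟩ : R) =
        inner (𝕜 := ℝ) ((b k : E)) (xstar M i) := rfl
    have h4 : inner (𝕜 := ℝ) ((b k : E)) (xstar M i) = (b k : E) i := by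
      have hmem : ((Submodule.orthogonalProjectionOnto (kerM M) (EuclideanSpace.single i 1) : E)) ∈ kerM M :=
        SetLike.coe_mem _
      have h5 : inner (𝕜 := ℝ) ((b k : E))
          ((Submodule.orthogonalProjectionOnto (kerM M) (EuclideanSpace.single i 1) : E)) = 0 :=
        (Submodule.mem_orthogonal' _ _).mp (SetLike.coe_mem (b k)) _ hmem
      rw [xstar, inner_sub_right, h5, sub_zero]
      have := EuclideanSpace.inner_single_right (𝕜 := ℝ) i 1 (b k : E)
      simpa using this
    rw [h2, h3, h4]
  rw [Finset.sum_congr rfl fun i _ => key i, Finset.sum_comm]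
  have hcol : ∀ k : Fin r, ∑ i : Fin N, ((b k : E) i) ^ 2 = 1 := by
    intro k
    have h6 : ‖(b k : E)‖ = 1 := by
      have := b.orthonormal.1 k
      rwa [Submodule.norm_coe]
    rw [← normsq_eq, h6, one_pow]
  rw [Finset.sum_congr rfl fun k _ => hcol k, Finset.sum_const, Finset.card_univ,
    Fintype.card_fin, nsmul_eq_mul, mul_one]
  -- r ≤ D
  have hrk : Module.finrank ℝ (kerM M) + Module.finrank ℝ R = N := by
    have := Submodule.finrank_add_finrank_orthogonal (K := kerM M)
    rwa [finrank_euclideanSpace_fin] at this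
  have hrk2 : Module.finrank ℝ (LinearMap.range (fmap M)) + Module.finrank ℝ (kerM M) = N := by
    have := LinearMap.finrank_range_add_finrank_ker (fmap M)
    rwa [finrank_euclideanSpace_fin] at this
  have hle : Module.finrank ℝ (LinearMap.range (fmap M)) ≤ D := by
    have h7 : Module.finrank ℝ (LinearMap.range (fmap M)) ≤ Module.finrank ℝ (Fin D → ℝ) :=
      Submodule.finrank_le _
    rwa [Module.finrank_pi, Fintype.card_fin] at h7
  have : r ≤ D := by omega
  exact_mod_cast this

section SMsec
variable {n d : ℕ}

/-- `A` with rows scaled by `w`, stacked on top of `ε` times the identity. -/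
noncomputable def SM (A : Matrix (Fin n) (Fin d) ℝ) (w : Fin n → ℝ) (ε : ℝ) :
    Matrix (Fin (n + d)) (Fin d) ℝ :=
  fun p j => Fin.addCases (fun i => w i * A i j) (fun k => if k = j then ε else 0) p

lemma SM_left (A : Matrix (Fin n) (Fin d) ℝ) (w : Fin n → ℝ) (ε : ℝ) (i : Fin n) (j : Fin d) :
    SM A w ε (Fin.castAdd d i) j = w i * A i j := by
  simp [SM]

lemma SM_right (A : Matrix (Fin n) (Fin d) ℝ) (w : Fin n → ℝ) (ε : ℝ) (k : Fin d) (j : Fin d) :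
    SM A w ε (Fin.natAdd n k) j = if k = j then ε else 0 := by
  simp [SM]

/-- feasibility predicate for row `i` of `SM A w ε`. -/
def Feas (A : Matrix (Fin n) (Fin d) ℝ) (w : Fin n → ℝ) (ε : ℝ) (i : Fin n)
    (x : Fin (n + d) → ℝ) : Prop :=
  ∀ j, (∑ k, w k * A k j * x (Fin.castAdd d k)) + ε * x (Fin.natAdd n j) = w i * A i j

lemma feas_iff (A : Matrix (Fin n) (Fin d) ℝ) (w : Fin n → ℝ) (ε : ℝ) (i : Fin n)
    (x : Fin (n + d) → ℝ) :
    ((SM A w ε)ᵀ *ᵥ x = SM A w ε (Fin.castAdd d i)) ↔ Feas A w ε i x := by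
  rw [funext_iff]
  refine forall_congr' fun j => ?_
  have hL : ((SM A w ε)ᵀ *ᵥ x) j
      = (∑ k, w k * A k j * x (Fin.castAdd d k)) + ε * x (Fin.natAdd n j) := by
    show ∑ p, (SM A w ε)ᵀ j p * x p = _
    have := Fin.sum_univ_add (f := fun p : Fin (n + d) => (SM A w ε)ᵀ j p * x p)
    rw [this]
    congr 1
    · exact Finset.sum_congr rfl fun k _ => by rw [Matrix.transpose_apply, SM_left]
    · rw [Finset.sum_congr rfl fun k (_ : k ∈ Finset.univ) => by
        rw [Matrix.transpose_apply, SM_right]]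
      simp [ite_mul, Finset.sum_ite_eq']
  rw [hL, SM_left]

lemma sum_diff_single {ι : Type*} [Fintype ι] (f g : ι → ℝ) (i : ι)
    (h : ∀ k, k ≠ i → f k = g k) : ∑ k, f k = ∑ k, g k + (f i - g i) := by
  have h1 : ∑ k, (f k - g k) = f i - g i :=
    Finset.sum_eq_single_of_mem i (Finset.mem_univ i)
      (fun k _ hk => by rw [h k hk]; ring)
  have h2 : ∑ k, f k = ∑ k, (g k + (f k - g k)) :=
    Finset.sum_congr rfl fun k _ => by ring
  rw [h2, Finset.sum_add_distrib, h1]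

lemma castAdd_ne_natAdd (i : Fin n) (k : Fin d) :
    (Fin.castAdd d i) ≠ (Fin.natAdd n k) := by
  intro h
  have := congrArg Fin.val h
  simp only [Fin.coe_castAdd, Fin.coe_natAdd] at this
  omega

lemma castAdd_inj {i k : Fin n} (h : (Fin.castAdd d i) = (Fin.castAdd d k)) : i = k := by
  have := congrArg Fin.val h
  simp only [Fin.coe_castAdd] at this
  exact Fin.ext this

variable {A : Matrix (Fin n) (Fin d) ℝ}

lemma lev_le_of_feas {w : Fin n → ℝ} {ε : ℝ} {i : Fin n} {x : Fin (n + d) → ℝ}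
    (h : Feas A w ε i x) :
    lev (SM A w ε) (Fin.castAdd d i) ≤ ∑ p, (x p) ^ 2 :=
  lev_le _ _ x ((feas_iff A w ε i x).mpr h)

lemma exists_feas_attain (w : Fin n → ℝ) (ε : ℝ) (i : Fin n) :
    ∃ x, Feas A w ε i x ∧ lev (SM A w ε) (Fin.castAdd d i) = ∑ p, (x p) ^ 2 := by
  obtain ⟨x, hx, hv⟩ := lev_attained (SM A w ε) (Fin.castAdd d i)
  exact ⟨x, (feas_iff A w ε i x).mp hx, hv⟩

/-- increasing the weight of row `i` does not increase the leverage score of row `j ≠ i`. -/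
lemma lev_mono_update (w : Fin n → ℝ) (hw : ∀ k, 0 ≤ w k) (ε : ℝ) {i j : Fin n}
    (hij : j ≠ i) {t : ℝ} (ht0 : 0 < t) (hti : w i ≤ t) :
    lev (SM A (Function.update w i t) ε) (Fin.castAdd d j)
      ≤ lev (SM A w ε) (Fin.castAdd d j) := by
  obtain ⟨x, hx, hval⟩ := exists_feas_attain (A := A) w ε j
  set q := Fin.castAdd d i with hq
  have hqq : ∀ p : Fin (n + d), (if p = q then x q * (w i / t) else x p) =
      (fun p => if p = q then x q * (w i / t) else x p) p := fun p => rfl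
  set x' : Fin (n + d) → ℝ := fun p => if p = q then x q * (w i / t) else x p with hx'
  have hxq : x' q = x q * (w i / t) := by rw [hx']; simp
  have hxne : ∀ p, p ≠ q → x' p = x p := fun p hp => by rw [hx']; simp [hp]
  have hxnat : ∀ k : Fin d, x' (Fin.natAdd n k) = x (Fin.natAdd n k) := fun k =>
    hxne _ (Ne.symm (castAdd_ne_natAdd i k))
  have hfe : Feas A (Function.update w i t) ε j x' := by
    intro j'
    have hold := hx j'
    have hsum : ∑ k, (Function.update w i t) k * A k j' * x' (Fin.castAdd d k)
        = ∑ k, w k * A k j' * x (Fin.castAdd d k) := by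
      refine Finset.sum_congr rfl fun k _ => ?_
      by_cases hk : k = i
      · subst hk
        rw [Function.update_self, ← hq, hxq]
        field_simp
      · rw [Function.update_of_ne hk, hxne _ (fun hc => hk (castAdd_inj (hq ▸ hc)))]
    rw [hxnat, hsum, Function.update_of_ne hij]
    exact hold
  have hv : ∑ p, (x' p) ^ 2 ≤ ∑ p, (x p) ^ 2 := by
    refine Finset.sum_le_sum fun p _ => ?_
    by_cases hp : p = q
    · subst hp
      rw [hxq]
      have h1 : 0 ≤ w i / t := div_nonneg (hw i) ht0.le
      have h2 : w i / t ≤ 1 := (div_le_one ht0).mpr hti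
      have h3 : (x q * (w i / t)) ^ 2 = (x q) ^ 2 * (w i / t) ^ 2 := by ring
      have h4 : (w i / t) ^ 2 ≤ 1 := by nlinarith
      nlinarith [sq_nonneg (x q)]
    · rw [hxne _ hp]
  calc lev (SM A (Function.update w i t) ε) (Fin.castAdd d j) ≤ ∑ p, (x' p) ^ 2 :=
        lev_le_of_feas hfe
    _ ≤ ∑ p, (x p) ^ 2 := hv
    _ = lev (SM A w ε) (Fin.castAdd d j) := hval.symm

/-- using only the ridge rows: row `i` with weight `t` has leverage at most `t²·‖aᵢ‖²/ε²`. -/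
lemma lev_ridge (w : Fin n → ℝ) {ε : ℝ} (hε : 0 < ε) (i : Fin n) (t : ℝ) :
    lev (SM A (Function.update w i t) ε) (Fin.castAdd d i)
      ≤ t ^ 2 * (∑ j, (A i j) ^ 2) / ε ^ 2 := by
  set x : Fin (n + d) → ℝ :=
    fun p => Fin.addCases (fun _ => 0) (fun k => t * A i k / ε) p with hxdef
  have hx1 : ∀ k : Fin n, x (Fin.castAdd d k) = 0 := fun k => by rw [hxdef]; simp
  have hx2 : ∀ k : Fin d, x (Fin.natAdd n k) = t * A i k / ε := fun k => by rw [hxdef]; simp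
  have hfe : Feas A (Function.update w i t) ε i x := by
    intro j
    rw [hx2, Function.update_self]
    rw [Finset.sum_congr rfl fun k _ => by rw [hx1 k, mul_zero]]
    rw [Finset.sum_const_zero, zero_add]
    field_simp
  have hval : ∑ p, (x p) ^ 2 = t ^ 2 * (∑ j, (A i j) ^ 2) / ε ^ 2 := by
    rw [Fin.sum_univ_add (f := fun p : Fin (n + d) => (x p) ^ 2)]
    have e1 : ∑ k : Fin n, x (Fin.castAdd d k) ^ 2 = 0 :=
      Finset.sum_eq_zero fun k _ => by rw [hx1 k]; ring
    have e2 : ∑ k : Fin d, x (Fin.natAdd n k) ^ 2 = ∑ k : Fin d, t ^ 2 * (A i k) ^ 2 / ε ^ 2 :=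
      Finset.sum_congr rfl fun k _ => by rw [hx2 k]; field_simp
    rw [e1, e2, zero_add, ← Finset.sum_div, ← Finset.mul_sum]
  calc lev (SM A (Function.update w i t) ε) (Fin.castAdd d i) ≤ ∑ p, (x p) ^ 2 :=
        lev_le_of_feas hfe
    _ = _ := hval

/-- raising the weight of row `i` from `w i > 0` to `t > 0`: explicit feasible point. -/
lemma lev_raise (w : Fin n → ℝ) (ε : ℝ) {i : Fin n} (hwi : 0 < w i)
    {x : Fin (n + d) → ℝ} (hx : Feas A w ε i x) {t : ℝ} (ht : 0 < t) :
    lev (SM A (Function.update w i t) ε) (Fin.castAdd d i)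
      ≤ (∑ p, (x p) ^ 2) - (x (Fin.castAdd d i)) ^ 2
        + (1 - w i * (1 - x (Fin.castAdd d i)) / t) ^ 2 := by
  set q := Fin.castAdd d i with hq
  set v : ℝ := 1 - w i * (1 - x q) / t with hv
  set x' : Fin (n + d) → ℝ := fun p => if p = q then v else x p with hx'
  have hxq : x' q = v := by rw [hx']; simp
  have hxne : ∀ p, p ≠ q → x' p = x p := fun p hp => by rw [hx']; simp [hp]
  have hxnat : ∀ k : Fin d, x' (Fin.natAdd n k) = x (Fin.natAdd n k) := fun k =>
    hxne _ (Ne.symm (castAdd_ne_natAdd i k))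
  have hveq : t * v = t - w i * (1 - x q) := by
    rw [hv]
    field_simp
  have hfe : Feas A (Function.update w i t) ε i x' := by
    intro j
    have hold := hx j
    have hsum : ∑ k, (Function.update w i t) k * A k j * x' (Fin.castAdd d k)
        = ∑ k, w k * A k j * x (Fin.castAdd d k)
          + ((Function.update w i t) i * A i j * x' q - w i * A i j * x q) := by
      refine sum_diff_single _ _ i fun k hk => ?_
      rw [Function.update_of_ne hk, hxne _ (fun hc => hk (castAdd_inj (hq ▸ hc)))]
    rw [hxnat, hsum, Function.update_self, hxq]
    linear_combination hold + A i j * hveq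
  have hval : ∑ p, (x' p) ^ 2 = (∑ p, (x p) ^ 2) - (x q) ^ 2 + v ^ 2 := by
    have h := sum_diff_single (fun p => (x' p) ^ 2) (fun p => (x p) ^ 2) q
      (fun p hp => by show (x' p) ^ 2 = (x p) ^ 2; rw [hxne _ hp])
    rw [h, hxq]
    ring
  calc lev (SM A (Function.update w i t) ε) q ≤ ∑ p, (x' p) ^ 2 := lev_le_of_feas hfe
    _ = _ := by rw [hval]

/-- limits of feasible points: if row `i` of `SM A (W m) (e m)` has leverage `≤ c` for all `m`,
and `W m → w`, `e m → ε₀`, then there is an `x` feasible for `(w, ε₀)` with `∑ x² ≤ c`. -/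
lemma feas_limit {W : ℕ → Fin n → ℝ} {e : ℕ → ℝ} {w : Fin n → ℝ} {ε₀ : ℝ} {i : Fin n} {c : ℝ}
    (hW : Tendsto W atTop (nhds w)) (he : Tendsto e atTop (nhds ε₀))
    (hlev : ∀ m, lev (SM A (W m) (e m)) (Fin.castAdd d i) ≤ c) :
    ∃ x : Fin (n + d) → ℝ, Feas A w ε₀ i x ∧ ∑ p, (x p) ^ 2 ≤ c := by
  choose X hX hXv using fun m => exists_feas_attain (A := A) (W m) (e m) i
  have hXc : ∀ m, ∑ p, (X m p) ^ 2 ≤ c := fun m => (hXv m) ▸ hlev m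
  have hc0 : 0 ≤ c := le_trans (by positivity) (hXc 0)
  -- coordinates bounded
  have hbd : ∀ m, X m ∈ Set.pi Set.univ fun _ : Fin (n + d) =>
      Set.Icc (-Real.sqrt c) (Real.sqrt c) := by
    intro m p _
    have h1 : (X m p) ^ 2 ≤ c := by
      refine le_trans ?_ (hXc m)
      exact Finset.single_le_sum (fun q _ => sq_nonneg (X m q)) (Finset.mem_univ p)
    have h2 := Real.abs_le_sqrt h1
    exact abs_le.mp h2
  have hcomp : IsCompact (Set.pi Set.univ fun _ : Fin (n + d) =>
      Set.Icc (-Real.sqrt c) (Real.sqrt c)) :=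
    isCompact_univ_pi fun _ => isCompact_Icc
  obtain ⟨x, -, φ, hφ, hxlim⟩ := hcomp.tendsto_subseq hbd
  have hφt : Tendsto φ atTop atTop :=
    tendsto_atTop_atTop_of_monotone hφ.monotone fun b => ⟨b, hφ.le_apply⟩
  have hWφ : Tendsto (W ∘ φ) atTop (nhds w) := hW.comp hφt
  have heφ : Tendsto (e ∘ φ) atTop (nhds ε₀) := he.comp hφt
  have hwk : ∀ k, Tendsto (fun m => W (φ m) k) atTop (nhds (w k)) :=
    fun k => (tendsto_pi_nhds.mp hWφ) k
  have hxk : ∀ p, Tendsto (fun m => X (φ m) p) atTop (nhds (x p)) :=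
    fun p => (tendsto_pi_nhds.mp hxlim) p
  refine ⟨x, ?_, ?_⟩
  · intro j
    have hL : Tendsto (fun m => (∑ k, W (φ m) k * A k j * X (φ m) (Fin.castAdd d k))
        + e (φ m) * X (φ m) (Fin.natAdd n j)) atTop
        (nhds ((∑ k, w k * A k j * x (Fin.castAdd d k)) + ε₀ * x (Fin.natAdd n j))) := by
      refine Tendsto.add ?_ (heφ.mul (hxk _))
      exact tendsto_finset_sum _ fun k _ => ((hwk k).mul tendsto_const_nhds).mul (hxk _)
    have hR : Tendsto (fun m => W (φ m) i * A i j) atTop (nhds (w i * A i j)) :=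
      (hwk i).mul tendsto_const_nhds
    have hEq : (fun m => (∑ k, W (φ m) k * A k j * X (φ m) (Fin.castAdd d k))
        + e (φ m) * X (φ m) (Fin.natAdd n j)) = fun m => W (φ m) i * A i j := by
      funext m
      exact hX (φ m) j
    rw [hEq] at hL
    exact tendsto_nhds_unique hL hR
  · have hsum : Tendsto (fun m => ∑ p, (X (φ m) p) ^ 2) atTop (nhds (∑ p, (x p) ^ 2)) :=
      tendsto_finset_sum _ fun p _ => (hxk p).pow 2
    exact le_of_tendsto hsum (Filter.Eventually.of_forall fun m => hXc (φ m))

/-- the feasibility region for fixed `ε` is compact. -/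
lemma K_compact (u : Fin n → ℝ) (ε : ℝ) :
    IsCompact {w : Fin n → ℝ | (∀ k, w k ∈ Set.Icc (0:ℝ) 1) ∧
      ∀ i, lev (SM A w ε) (Fin.castAdd d i) ≤ u i} := by
  have hbox : IsCompact (Set.pi Set.univ fun _ : Fin n => Set.Icc (0:ℝ) 1) :=
    isCompact_univ_pi fun _ => isCompact_Icc
  refine IsCompact.of_isClosed_subset hbox ?_ ?_
  · have h1 : IsClosed (Set.pi Set.univ fun _ : Fin n => Set.Icc (0:ℝ) 1) :=
      isClosed_set_pi fun _ _ => isClosed_Icc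
    have h2 : ∀ i : Fin n, IsClosed {w : Fin n → ℝ | lev (SM A w ε) (Fin.castAdd d i) ≤ u i} := by
      intro i
      refine IsSeqClosed.isClosed ?_
      intro W w hWm hWlim
      obtain ⟨x, hfe, hval⟩ := feas_limit (A := A) hWlim tendsto_const_nhds hWm
      exact le_trans (lev_le_of_feas hfe) hval
    have : {w : Fin n → ℝ | (∀ k, w k ∈ Set.Icc (0:ℝ) 1) ∧
        ∀ i, lev (SM A w ε) (Fin.castAdd d i) ≤ u i}
        = (Set.pi Set.univ fun _ : Fin n => Set.Icc (0:ℝ) 1) ∩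
          ⋂ i : Fin n, {w : Fin n → ℝ | lev (SM A w ε) (Fin.castAdd d i) ≤ u i} := by
      ext w
      constructor
      · rintro ⟨hb, hl⟩
        exact ⟨fun k _ => hb k, Set.mem_iInter.mpr fun i => hl i⟩
      · rintro ⟨hb, hl⟩
        exact ⟨fun k => hb k (Set.mem_univ k), fun i => Set.mem_iInter.mp hl i⟩
    rw [this]
    exact h1.inter (isClosed_iInter h2)
  · intro w hw k _
    exact hw.1 k

lemma exists_weights_eps (u : Fin n → ℝ) (hu : ∀ i, 0 < u i) {ε : ℝ} (hε : 0 < ε) :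
    ∃ w : Fin n → ℝ, (∀ k, 0 ≤ w k ∧ w k ≤ 1) ∧
      (∀ i, lev (SM A w ε) (Fin.castAdd d i) ≤ u i) ∧
      (∑ i ∈ Finset.univ.filter (fun i => w i ≠ 1), u i) ≤ (d : ℝ) := by
  classical
  set K := {w : Fin n → ℝ | (∀ k, w k ∈ Set.Icc (0:ℝ) 1) ∧
      ∀ i, lev (SM A w ε) (Fin.castAdd d i) ≤ u i} with hK
  have h0K : (fun _ : Fin n => (0:ℝ)) ∈ K := by
    constructor
    · intro k; exact ⟨le_refl 0, zero_le_one⟩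
    · intro i
      have hfe : Feas A (fun _ => (0:ℝ)) ε i (fun _ => 0) := by
        intro j; simp
      have h := lev_le_of_feas hfe
      calc lev (SM A (fun _ => (0:ℝ)) ε) (Fin.castAdd d i) ≤ ∑ p : Fin (n+d), (0:ℝ)^2 := h
        _ ≤ u i := by simpa using (hu i).le
  have hcont : ContinuousOn (fun w : Fin n → ℝ => ∑ k, u k * w k) K :=
    (continuous_finset_sum _ fun i _ => continuous_const.mul (continuous_apply i)).continuousOn
  obtain ⟨w, hwK, hmax⟩ := (K_compact (A := A) u ε).exists_isMaxOn ⟨_, h0K⟩ hcont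
  have hbox : ∀ k, 0 ≤ w k ∧ w k ≤ 1 := fun k => ⟨(hwK.1 k).1, (hwK.1 k).2⟩
  -- any strictly larger feasible single-coordinate update contradicts maximality
  have hΦ : ∀ (i : Fin n) (t : ℝ), Function.update w i t ∈ K → w i < t → False := by
    intro i t hmem hlt
    have h2 : ∑ k, u k * Function.update w i t k ≤ ∑ k, u k * w k := hmax hmem
    have hsum : ∑ k, u k * Function.update w i t k
        = (∑ k, u k * w k) + (u i * Function.update w i t i - u i * w i) :=
      sum_diff_single _ _ i fun k hk => by rw [Function.update_of_ne hk]
    rw [Function.update_self] at hsum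
    rw [hsum] at h2
    nlinarith [mul_lt_mul_of_pos_left hlt (hu i)]
  -- all weights are positive at the maximizer
  have hpos : ∀ i, 0 < w i := by
    intro i
    rcases lt_or_eq_of_le (hbox i).1 with h | h
    · exact h
    set S := ∑ j, (A i j) ^ 2 with hS
    have hS0 : 0 ≤ S := Finset.sum_nonneg fun j _ => sq_nonneg _
    set D := Real.sqrt S + ε with hD
    have hD0 : 0 < D := by positivity
    set t := min 1 (ε * Real.sqrt (u i) / D) with ht
    have ht0 : 0 < t := by
      apply lt_min one_pos
      have : 0 < Real.sqrt (u i) := Real.sqrt_pos.mpr (hu i)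
      positivity
    have ht1 : t ≤ 1 := min_le_left _ _
    have htD : t * D ≤ ε * Real.sqrt (u i) := by
      have hβ : t ≤ ε * Real.sqrt (u i) / D := min_le_right _ _
      calc t * D ≤ (ε * Real.sqrt (u i) / D) * D := by nlinarith
        _ = ε * Real.sqrt (u i) := by field_simp
    have hbound : t ^ 2 * S / ε ^ 2 ≤ u i := by
      rw [div_le_iff₀ (by positivity)]
      have h1 : S ≤ D ^ 2 := by
        have := Real.sq_sqrt hS0
        have := Real.sqrt_nonneg S
        nlinarith
      have h2 : (t * D) ^ 2 ≤ (ε * Real.sqrt (u i)) ^ 2 := by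
        have h3 : 0 ≤ t * D := by positivity
        nlinarith
      have h4 : (ε * Real.sqrt (u i)) ^ 2 = u i * ε ^ 2 := by
        have := Real.sq_sqrt (hu i).le
        nlinarith
      nlinarith [sq_nonneg t]
    exfalso
    refine hΦ i t ?_ (by rw [← h]; exact ht0)
    constructor
    · intro k
      by_cases hk : k = i
      · subst hk; rw [Function.update_self]; exact ⟨ht0.le, ht1⟩
      · rw [Function.update_of_ne hk]; exact hwK.1 k
    · intro j
      by_cases hj : j = i
      · subst hj
        calc lev (SM A (Function.update w j t) ε) (Fin.castAdd d j)
            ≤ t ^ 2 * (∑ k, (A j k) ^ 2) / ε ^ 2 := lev_ridge w hε j t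
          _ ≤ u j := hbound
      · calc lev (SM A (Function.update w i t) ε) (Fin.castAdd d j)
            ≤ lev (SM A w ε) (Fin.castAdd d j) :=
              lev_mono_update w (fun k => (hbox k).1) ε hj ht0 (by rw [← h]; exact ht0.le)
          _ ≤ u j := hwK.2 j
  -- at the maximizer, any non-saturated weight has leverage at least `u i`
  have hclaim : ∀ i, w i < 1 → u i ≤ lev (SM A w ε) (Fin.castAdd d i) := by
    intro i hwi1
    by_contra hcon
    push_neg at hcon
    obtain ⟨x, hx, hval⟩ := exists_feas_attain (A := A) w ε i
    set xi := x (Fin.castAdd d i) with hxi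
    set T : ℕ → ℝ := fun m => w i + 1 / (m + 1) with hT
    have hTpos : ∀ m, 0 < T m := fun m => by
      have h1 : (0:ℝ) < 1 / (m + 1) := by positivity
      have h2 := hpos i
      simp only [hT]
      linarith
    have hTgt : ∀ m, w i < T m := fun m => by
      have : (0:ℝ) < 1 / (m + 1) := by positivity
      simp only [hT]; linarith
    have hTlim : Tendsto T atTop (nhds (w i)) := by
      have h1 : Tendsto (fun m : ℕ => 1 / ((m:ℝ) + 1)) atTop (nhds 0) :=
        tendsto_one_div_add_atTop_nhds_zero_nat
      have h2 : Tendsto (fun m : ℕ => w i + 1 / ((m:ℝ) + 1)) atTop (nhds (w i + 0)) :=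
        Tendsto.add tendsto_const_nhds h1
      simpa [hT] using h2
    have hVlim : Tendsto (fun m => (∑ p, (x p) ^ 2) - xi ^ 2
        + (1 - w i * (1 - xi) / T m) ^ 2) atTop
        (nhds ((∑ p, (x p) ^ 2) - xi ^ 2 + (1 - w i * (1 - xi) / w i) ^ 2)) := by
      refine Tendsto.add tendsto_const_nhds ?_
      exact ((tendsto_const_nhds.sub
        (Tendsto.div tendsto_const_nhds hTlim (ne_of_gt (hpos i))))).pow 2
    have hVval : (∑ p, (x p) ^ 2) - xi ^ 2 + (1 - w i * (1 - xi) / w i) ^ 2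
        = ∑ p, (x p) ^ 2 := by
      have hne := ne_of_gt (hpos i)
      field_simp
      ring
    rw [hVval] at hVlim
    rw [hval] at hcon
    have hev1 : ∀ᶠ m in atTop, (∑ p, (x p) ^ 2) - xi ^ 2
        + (1 - w i * (1 - xi) / T m) ^ 2 < u i := hVlim.eventually_lt_const hcon
    have hev2 : ∀ᶠ m in atTop, T m < 1 := hTlim.eventually_lt_const hwi1
    obtain ⟨m, hm1, hm2⟩ := (hev1.and hev2).exists
    refine hΦ i (T m) ?_ (hTgt m)
    constructor
    · intro k
      by_cases hk : k = i
      · subst hk; rw [Function.update_self]; exact ⟨(hTpos m).le, hm2.le⟩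
      · rw [Function.update_of_ne hk]; exact hwK.1 k
    · intro j
      by_cases hj : j = i
      · subst hj
        calc lev (SM A (Function.update w j (T m)) ε) (Fin.castAdd d j)
            ≤ (∑ p, (x p) ^ 2) - xi ^ 2 + (1 - w j * (1 - xi) / T m) ^ 2 :=
              lev_raise w ε (hpos j) hx (hTpos m)
          _ ≤ u j := hm1.le
      · calc lev (SM A (Function.update w i (T m)) ε) (Fin.castAdd d j)
            ≤ lev (SM A w ε) (Fin.castAdd d j) :=
              lev_mono_update w (fun k => (hbox k).1) ε hj (hTpos m) (hTgt m).le
          _ ≤ u j := hwK.2 j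
  -- conclude
  refine ⟨w, hbox, hwK.2, ?_⟩
  have h1 : ∑ i ∈ Finset.univ.filter (fun i => w i ≠ 1), u i
      ≤ ∑ i ∈ Finset.univ.filter (fun i => w i ≠ 1), lev (SM A w ε) (Fin.castAdd d i) := by
    refine Finset.sum_le_sum fun i hi => ?_
    have := (Finset.mem_filter.mp hi).2
    exact hclaim i (lt_of_le_of_ne (hbox i).2 this)
  have h2 : ∑ i ∈ Finset.univ.filter (fun i => w i ≠ 1), lev (SM A w ε) (Fin.castAdd d i)
      ≤ ∑ i : Fin n, lev (SM A w ε) (Fin.castAdd d i) :=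
    Finset.sum_le_sum_of_subset_of_nonneg (Finset.filter_subset _ _)
      (fun i _ _ => lev_nonneg _ _)
  have h3 : ∑ i : Fin n, lev (SM A w ε) (Fin.castAdd d i)
      ≤ ∑ p : Fin (n + d), lev (SM A w ε) p := by
    rw [Fin.sum_univ_add (f := fun p : Fin (n + d) => lev (SM A w ε) p)]
    exact le_add_of_nonneg_right (Finset.sum_nonneg fun k _ => lev_nonneg _ _)
  have h4 : ∑ p : Fin (n + d), lev (SM A w ε) p ≤ (d : ℝ) := sum_lev_le _
  linarith

end SMsec
end LevAux

/-- leverage score bounding row reweighting: for any `A ∈ ℝ^{n×d}` and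
any `u` with all entries positive, there is a diagonal matrix `W` with entries in `[0,1]`
such that `τᵢ(WA) ≤ uᵢ` for all `i` and `∑_{i : Wᵢᵢ ≠ 1} uᵢ ≤ d`. -/
theorem stmt8 {n d : ℕ} (A : Matrix (Fin n) (Fin d) ℝ) (u : Fin n → ℝ)
    (hu : ∀ i, 0 < u i) :
    ∃ w : Fin n → ℝ,
      (∀ i, 0 ≤ w i ∧ w i ≤ 1) ∧
      (∀ i, lev (Matrix.diagonal w * A) i ≤ u i) ∧
      (∑ i ∈ Finset.univ.filter (fun i => w i ≠ 1), u i) ≤ (d : ℝ) := by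
  classical
  choose W hW1 hW2 hW3 using fun m : ℕ =>
    LevAux.exists_weights_eps (A := A) u hu (ε := 1 / ((m : ℝ) + 1)) (by positivity)
  have hmem : ∀ m, W m ∈ Set.pi Set.univ fun _ : Fin n => Set.Icc (0:ℝ) 1 :=
    fun m k _ => ⟨(hW1 m k).1, (hW1 m k).2⟩
  obtain ⟨w, hwbox, φ, hφ, hwlim⟩ :=
    (isCompact_univ_pi fun _ : Fin n => isCompact_Icc).tendsto_subseq hmem
  have hφt : Filter.Tendsto φ Filter.atTop Filter.atTop :=
    Filter.tendsto_atTop_atTop_of_monotone hφ.monotone fun b => ⟨b, hφ.le_apply⟩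
  have hwk : ∀ k, Filter.Tendsto (fun m => W (φ m) k) Filter.atTop (nhds (w k)) :=
    fun k => (tendsto_pi_nhds.mp hwlim) k
  refine ⟨w, fun i => hwbox i (Set.mem_univ i), ?_, ?_⟩
  · intro i
    have helim : Filter.Tendsto (fun m => 1 / ((φ m : ℝ) + 1)) Filter.atTop (nhds 0) :=
      tendsto_one_div_add_atTop_nhds_zero_nat.comp hφt
    obtain ⟨x, hfe, hval⟩ := LevAux.feas_limit (A := A) (i := i) (c := u i)
      hwlim helim (fun m => hW2 (φ m) i)
    set y : Fin n → ℝ := fun k => x (Fin.castAdd d k) with hy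
    have hcon : (Matrix.diagonal w * A)ᵀ *ᵥ y = (Matrix.diagonal w * A) i := by
      funext j
      have hj := hfe j
      rw [zero_mul, add_zero] at hj
      show ∑ k, (Matrix.diagonal w * A)ᵀ j k * y k = (Matrix.diagonal w * A) i j
      rw [Matrix.diagonal_mul]
      calc ∑ k, (Matrix.diagonal w * A)ᵀ j k * y k
          = ∑ k, w k * A k j * x (Fin.castAdd d k) := by
            refine Finset.sum_congr rfl fun k _ => ?_
            rw [Matrix.transpose_apply, Matrix.diagonal_mul, hy]
        _ = w i * A i j := hj
    have hle : lev (Matrix.diagonal w * A) i ≤ ∑ k, (y k) ^ 2 :=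
      LevAux.lev_le _ i y hcon
    have hle2 : ∑ k, (y k) ^ 2 ≤ ∑ p, (x p) ^ 2 := by
      rw [Fin.sum_univ_add (f := fun p : Fin (n + d) => (x p) ^ 2)]
      exact le_add_of_nonneg_right (Finset.sum_nonneg fun k _ => sq_nonneg _)
    linarith
  · have hev : ∀ᶠ m in Filter.atTop, ∀ i, w i ≠ 1 → W (φ m) i ≠ 1 := by
      rw [Filter.eventually_all]
      intro i
      by_cases hi : w i ≠ 1
      · exact ((hwk i).eventually_ne hi).mono fun m h _ => h
      · exact Filter.Eventually.of_forall fun m hcon => (hi hcon).elim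
    obtain ⟨m, hm⟩ := hev.exists
    have hsub : Finset.univ.filter (fun i => w i ≠ 1)
        ⊆ Finset.univ.filter (fun i => W (φ m) i ≠ 1) := fun i hi =>
      Finset.mem_filter.mpr ⟨Finset.mem_univ i, hm i (Finset.mem_filter.mp hi).2⟩
    calc ∑ i ∈ Finset.univ.filter (fun i => w i ≠ 1), u i
        ≤ ∑ i ∈ Finset.univ.filter (fun i => W (φ m) i ≠ 1), u i :=
          Finset.sum_le_sum_of_subset_of_nonneg hsub fun i _ _ => (hu i).le
      _ ≤ (d : ℝ) := hW3 (φ m)
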